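/- Suppose ξ(S⁰) < 1 and (1 − ξ(S⁰))² − 4ξ(σ) > 0, where ξ(σ) := max_i Σ_{j=1}^n |Z̃_{ij}·σ_j|. Then γ(S,σ) + 2ξ(S)·η(σ) < 1 and ξ(S) − η(σ) ≤ 1. Consequently, the solvability set of incremental loads certified by the condition of Wang et al. is contained in the solvability set certified by the proposed condition. -/

import Mathlib

open Complex

/-- `η_i(σ) := Σ_j Z̃_{ij} · conj(σ_j)` -/
noncomputable def etaI {n : ℕ} (Z : Matrix (Fin n) (Fin n) ℂ) (σ : Fin n → ℂ) (i : Fin n) : ℂ :=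
  ∑ j, Z i j * (starRingEnd ℂ) (σ j)

/-- `ξ_i(S) := Σ_j |Z̃_{ij} · S_j|` -/
noncomputable def xiI {n : ℕ} (Z : Matrix (Fin n) (Fin n) ℂ) (S : Fin n → ℂ) (i : Fin n) : ℝ :=
  ∑ j, ‖Z i j * S j‖

/-- `γ_i(S,σ) := 2(ξ_i(S) + Re η_i(σ)) − ξ_i(S)² − |η_i(σ)|²` -/
noncomputable def gammaI {n : ℕ} (Z : Matrix (Fin n) (Fin n) ℂ) (S σ : Fin n → ℂ)
    (i : Fin n) : ℝ :=
  2 * (xiI Z S i + (etaI Z σ i).re) - (xiI Z S i) ^ 2 - ‖etaI Z σ i‖ ^ 2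

/-- `η(σ) := max_i |η_i(σ)|` -/
noncomputable def etaMax {n : ℕ} (Z : Matrix (Fin n) (Fin n) ℂ) (σ : Fin n → ℂ) : ℝ :=
  ⨆ i, ‖etaI Z σ i‖

/-- `ξ(S) := max_i ξ_i(S)` -/
noncomputable def xiMax {n : ℕ} (Z : Matrix (Fin n) (Fin n) ℂ) (S : Fin n → ℂ) : ℝ :=
  ⨆ i, xiI Z S i

/-- `γ(S,σ) := max_i γ_i(S,σ)` -/
noncomputable def gammaMax {n : ℕ} (Z : Matrix (Fin n) (Fin n) ℂ) (S σ : Fin n → ℂ) : ℝ :=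
  ⨆ i, gammaI Z S σ i

/-- `r̲ := sqrt((1−γ − √Δ)/(2ξ(S)²))` where `Δ = (1−γ)² − 4ξ(S)²η(σ)²` -/
noncomputable def rLow {n : ℕ} (Z : Matrix (Fin n) (Fin n) ℂ) (S σ : Fin n → ℂ) : ℝ :=
  Real.sqrt ((1 - gammaMax Z S σ -
      Real.sqrt ((1 - gammaMax Z S σ) ^ 2 - 4 * (xiMax Z S) ^ 2 * (etaMax Z σ) ^ 2)) /
    (2 * (xiMax Z S) ^ 2))

/-- `r̄ := sqrt((1−γ + √Δ)/(2ξ(S)²))` where `Δ = (1−γ)² − 4ξ(S)²η(σ)²` -/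
noncomputable def rHigh {n : ℕ} (Z : Matrix (Fin n) (Fin n) ℂ) (S σ : Fin n → ℂ) : ℝ :=
  Real.sqrt ((1 - gammaMax Z S σ +
      Real.sqrt ((1 - gammaMax Z S σ) ^ 2 - 4 * (xiMax Z S) ^ 2 * (etaMax Z σ) ^ 2)) /
    (2 * (xiMax Z S) ^ 2))

/-- the fixed point power flow map
`F(u)_i := 1 − Σ_j Z̃_{ij}·conj(σ_j) + Σ_j Z̃_{ij}·(1 − 1/conj(u_j))·conj(S_j)` -/
noncomputable def pfMap {n : ℕ} (Z : Matrix (Fin n) (Fin n) ℂ) (S σ : Fin n → ℂ)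
    (u : Fin n → ℂ) : Fin n → ℂ :=
  fun i => 1 - ∑ j, Z i j * (starRingEnd ℂ) (σ j)
    + ∑ j, Z i j * (1 - 1 / (starRingEnd ℂ) (u j)) * (starRingEnd ℂ) (S j)

section Aux

variable {n : ℕ} (Z : Matrix (Fin n) (Fin n) ℂ)

lemma xiI_nonneg (S : Fin n → ℂ) (i : Fin n) : 0 ≤ xiI Z S i :=
  Finset.sum_nonneg fun _ _ => norm_nonneg _

lemma xiI_le_xiMax (S : Fin n → ℂ) (i : Fin n) : xiI Z S i ≤ xiMax Z S :=
  le_ciSup (Set.Finite.bddAbove (Set.finite_range _)) i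

lemma abs_etaI_le_etaMax (σ : Fin n → ℂ) (i : Fin n) :
    ‖etaI Z σ i‖ ≤ etaMax Z σ := by
  exact le_ciSup (f := fun i => ‖etaI Z σ i‖)
    (Set.Finite.bddAbove (Set.finite_range _)) i

lemma abs_etaI_le_xiI (σ : Fin n → ℂ) (i : Fin n) :
    ‖etaI Z σ i‖ ≤ xiI Z σ i := by
  refine (norm_sum_le _ _).trans ?_
  apply le_of_eq
  refine Finset.sum_congr rfl fun j _ => ?_
  rw [norm_mul, norm_mul, Complex.norm_conj]

lemma xiMax_nonneg (hn : 1 ≤ n) (S : Fin n → ℂ) : 0 ≤ xiMax Z S := by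
  have : Nonempty (Fin n) := ⟨⟨0, hn⟩⟩
  exact le_trans (xiI_nonneg Z S (Classical.arbitrary _))
    (xiI_le_xiMax Z S (Classical.arbitrary _))

lemma etaMax_nonneg (hn : 1 ≤ n) (σ : Fin n → ℂ) : 0 ≤ etaMax Z σ := by
  have : Nonempty (Fin n) := ⟨⟨0, hn⟩⟩
  exact le_trans (norm_nonneg _)
    (abs_etaI_le_etaMax Z σ (Classical.arbitrary _))

lemma etaMax_le_xiMax (hn : 1 ≤ n) (σ : Fin n → ℂ) : etaMax Z σ ≤ xiMax Z σ := by
  have : Nonempty (Fin n) := ⟨⟨0, hn⟩⟩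
  exact ciSup_le fun i => (abs_etaI_le_xiI Z σ i).trans (xiI_le_xiMax Z σ i)

lemma xiMax_add_le (hn : 1 ≤ n) (S0 σ : Fin n → ℂ) :
    xiMax Z (S0 + σ) ≤ xiMax Z S0 + xiMax Z σ := by
  have : Nonempty (Fin n) := ⟨⟨0, hn⟩⟩
  refine ciSup_le fun i => ?_
  have h1 : xiI Z (S0 + σ) i ≤ xiI Z S0 i + xiI Z σ i := by
    unfold xiI
    rw [← Finset.sum_add_distrib]
    refine Finset.sum_le_sum fun j _ => ?_
    have : Z i j * (S0 + σ) j = Z i j * S0 j + Z i j * σ j := by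
      simp [Pi.add_apply]; ring
    rw [this]
    exact norm_add_le _ _
  exact h1.trans (add_le_add (xiI_le_xiMax Z S0 i) (xiI_le_xiMax Z σ i))

lemma arith_key (a s x y p q r : ℝ) (ha0 : 0 ≤ a) (ha1 : a < 1) (hs0 : 0 ≤ s)
    (h4 : (1 - a) ^ 2 - 4 * s > 0) (hx0 : 0 ≤ x) (hxas : x ≤ a + s)
    (hy0 : 0 ≤ y) (hys : y ≤ s) (hp0 : 0 ≤ p) (hp : p ≤ x)
    (hq0 : 0 ≤ q) (hq : q ≤ y) (hr : r ≤ q) :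
    2 * (p + r) - p ^ 2 - q ^ 2 + 2 * x * y < 1 := by
  have hpos : 0 < 1 - a - 2 * s := by
    nlinarith [mul_nonneg ha0 (by linarith : (0:ℝ) ≤ 1 - a)]
  have hxy1 : x + y < 1 := by linarith
  have hxy : x * y ≤ (a + s) * s := mul_le_mul hxas hys hy0 (by linarith)
  have hge : 1 - a - 2 * s ≤ 1 - x - y := by linarith
  have hsq : (1 - a - 2 * s) ^ 2 ≤ (1 - x - y) ^ 2 :=
    pow_le_pow_left₀ hpos.le hge 2
  have h2 : 4 * (x * y) < (1 - x - y) ^ 2 := by nlinarith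
  have h3 : 2 * p - p ^ 2 ≤ 2 * x - x ^ 2 := by
    nlinarith [mul_nonneg (sub_nonneg.2 hp) (by linarith : (0:ℝ) ≤ 2 - x - p)]
  have h4' : 2 * r - q ^ 2 ≤ 2 * y - y ^ 2 := by
    nlinarith [mul_nonneg (sub_nonneg.2 hq) (by linarith : (0:ℝ) ≤ 2 - y - q)]
  nlinarith [h2, h3, h4']

end Aux

/-- if `ξ(S⁰) < 1` and `(1 − ξ(S⁰))² − 4ξ(σ) > 0` (the condition of
Wang et al.), then `γ(S,σ) + 2ξ(S)η(σ) < 1` and `ξ(S) − η(σ) ≤ 1`; consequently the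
incremental-load solvability set of Wang et al. is contained in the proposed one. -/
theorem wang_incremental_condition_implies_proposed {n : ℕ} (hn : 1 ≤ n)
    (Z : Matrix (Fin n) (Fin n) ℂ) (hZ : IsUnit Z.det)
    (S0 : Fin n → ℂ) (hbase : xiMax Z S0 < 1) :
    (∀ σ S : Fin n → ℂ, S = S0 + σ → (1 - xiMax Z S0) ^ 2 - 4 * xiMax Z σ > 0 →
      gammaMax Z S σ + 2 * xiMax Z S * etaMax Z σ < 1 ∧ xiMax Z S - etaMax Z σ ≤ 1) ∧
    {σ : Fin n → ℂ | (1 - xiMax Z S0) ^ 2 - 4 * xiMax Z σ > 0} ⊆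
      {σ : Fin n → ℂ |
        gammaMax Z (S0 + σ) σ + 2 * xiMax Z (S0 + σ) * etaMax Z σ < 1 ∧
        xiMax Z (S0 + σ) - etaMax Z σ ≤ 1} := by
  have : Nonempty (Fin n) := ⟨⟨0, hn⟩⟩
  have key : ∀ σ S : Fin n → ℂ, S = S0 + σ → (1 - xiMax Z S0) ^ 2 - 4 * xiMax Z σ > 0 →
      gammaMax Z S σ + 2 * xiMax Z S * etaMax Z σ < 1 ∧ xiMax Z S - etaMax Z σ ≤ 1 := by
    intro σ S hS h4
    subst hS
    set a := xiMax Z S0 with ha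
    set s := xiMax Z σ with hs
    set x := xiMax Z (S0 + σ) with hx
    set y := etaMax Z σ with hy
    have ha0 : 0 ≤ a := xiMax_nonneg Z hn S0
    have hs0 : 0 ≤ s := xiMax_nonneg Z hn σ
    have hx0 : 0 ≤ x := xiMax_nonneg Z hn (S0 + σ)
    have hy0 : 0 ≤ y := etaMax_nonneg Z hn σ
    have hxas : x ≤ a + s := xiMax_add_le Z hn S0 σ
    have hys : y ≤ s := etaMax_le_xiMax Z hn σ
    have ha1 : a < 1 := hbase
    constructor
    · obtain ⟨i0, hi0⟩ := Finite.exists_max (fun i => gammaI Z (S0 + σ) σ i)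
      have hγ : gammaMax Z (S0 + σ) σ ≤ gammaI Z (S0 + σ) σ i0 := ciSup_le hi0
      have hp : xiI Z (S0 + σ) i0 ≤ x := xiI_le_xiMax Z (S0 + σ) i0
      have hp0 : 0 ≤ xiI Z (S0 + σ) i0 := xiI_nonneg Z (S0 + σ) i0
      have hq : ‖etaI Z σ i0‖ ≤ y := abs_etaI_le_etaMax Z σ i0
      have hq0 : 0 ≤ ‖etaI Z σ i0‖ := norm_nonneg _
      have hre : (etaI Z σ i0).re ≤ ‖etaI Z σ i0‖ := Complex.re_le_norm _
      have : gammaI Z (S0 + σ) σ i0 + 2 * x * y < 1 := by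
        unfold gammaI
        have := arith_key a s x y (xiI Z (S0 + σ) i0) (‖etaI Z σ i0‖)
          ((etaI Z σ i0).re) ha0 ha1 hs0 h4 hx0 hxas hy0 hys hp0 hp hq0 hq hre
        linarith
      linarith
    · nlinarith [sq_nonneg (1 - a)]
  exact ⟨key, fun σ hσ => key σ (S0 + σ) rfl hσ⟩
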